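/- For all d ≥ 2 and h ≥ 2, the complete d-ary tree of height h can be fractionally pebbled using at most (d-1)h/2 + 1 pebbles. -/

import Mathlib

/-! ## Fractional black-white pebbling -/

/-- A fractional pebble configuration: black and white pebble values on each node. -/
structure FConfig (V : Type) where
  b : V → ℝ
  w : V → ℝ

namespace FConfig

/-- Validity: all values nonnegative, total value of each node at most 1. -/
def Valid {V : Type} (C : FConfig V) : Prop :=
  ∀ v, 0 ≤ C.b v ∧ 0 ≤ C.w v ∧ C.b v + C.w v ≤ 1

/-- Total pebble weight of a configuration. -/
noncomputable def weight {V : Type} [Fintype V] (C : FConfig V) : ℝ :=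
  ∑ v, (C.b v + C.w v)

/-- The empty configuration. -/
def zero (V : Type) : FConfig V := ⟨fun _ => 0, fun _ => 0⟩

/-- A whole (non-fractional) configuration: all values 0 or 1. -/
def Whole {V : Type} (C : FConfig V) : Prop :=
  ∀ v, (C.b v = 0 ∨ C.b v = 1) ∧ (C.w v = 0 ∨ C.w v = 1)

/-- A black configuration: whole, and with no white pebbles. -/
def BlackOnly {V : Type} (C : FConfig V) : Prop :=
  C.Whole ∧ ∀ v, C.w v = 0

end FConfig

/-- One legal move of the fractional black-white pebble game (no white sliding):
(i) decrease a black value; (ii) increase a white value; (iii) if every child of `v`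
has total pebble value 1, decrease `w v` to 0 and/or increase `b v` arbitrarily while
simultaneously decreasing the black values of the children of `v` arbitrarily.
Here `child c v` means `c` is a child of `v`. -/
def FMove {V : Type} (child : V → V → Prop) (C C' : FConfig V) : Prop :=
  (∃ v, C'.b v ≤ C.b v ∧ C'.w v = C.w v ∧
     ∀ u, u ≠ v → C'.b u = C.b u ∧ C'.w u = C.w u) ∨
  (∃ v, C'.b v = C.b v ∧ C.w v ≤ C'.w v ∧
     ∀ u, u ≠ v → C'.b u = C.b u ∧ C'.w u = C.w u) ∨
  (∃ v, (∀ c, child c v → C.b c + C.w c = 1) ∧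
     C.b v ≤ C'.b v ∧ (C'.w v = 0 ∨ C'.w v = C.w v) ∧
     (∀ c, child c v → C'.b c ≤ C.b c ∧ C'.w c = C.w c) ∧
     (∀ u, u ≠ v → ¬ child u v → C'.b u = C.b u ∧ C'.w u = C.w u))

/-- The additional white sliding move: if `w v = 1`, `j` is a child of `v`, and every
child of `v` other than `j` has total pebble value 1, then set `w v = 0` and increase
`w j` so that `j` gets total pebble value 1. -/
def WhiteSlide {V : Type} (child : V → V → Prop) (C C' : FConfig V) : Prop :=
  ∃ v j, child j v ∧ j ≠ v ∧ C.w v = 1 ∧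
    (∀ c, child c v → c ≠ j → C.b c + C.w c = 1) ∧
    C'.w v = 0 ∧ C'.b v = C.b v ∧
    C'.b j = C.b j ∧ C.w j ≤ C'.w j ∧ C'.b j + C'.w j = 1 ∧
    (∀ u, u ≠ v → u ≠ j → C'.b u = C.b u ∧ C'.w u = C.w u)

/-- A pebbling of cost at most `p`, with moves given by `move`, all configurations
satisfying the extra constraint `Extra`, starting and ending with the empty
configuration and achieving `Goal` (a property of the whole sequence together with
its length). -/
def PebblingLE {V : Type} [Fintype V] (move : FConfig V → FConfig V → Prop)
    (Extra : FConfig V → Prop) (Goal : (ℕ → FConfig V) → ℕ → Prop) (p : ℝ) : Prop :=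
  ∃ (n : ℕ) (C : ℕ → FConfig V),
    C 0 = FConfig.zero V ∧ C n = FConfig.zero V ∧
    (∀ t ≤ n, (C t).Valid) ∧
    (∀ t ≤ n, Extra (C t)) ∧
    (∀ t < n, move (C t) (C (t + 1))) ∧
    Goal C n ∧
    (∀ t ≤ n, (C t).weight ≤ p)

/-! ## The complete `d`-ary tree of height `h` (with `h` levels) -/

/-- Nodes of the complete `d`-ary tree with `h` levels: a level `l < h`
together with an index among the `d ^ l` nodes of that level. -/
abbrev TNode (d h : ℕ) := Σ l : Fin h, Fin (d ^ (l : ℕ))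

/-- `c` is a child of `v` in the complete `d`-ary tree. -/
def IsChild (d h : ℕ) (c v : TNode d h) : Prop :=
  (c.1 : ℕ) = (v.1 : ℕ) + 1 ∧ ∃ j : Fin d, (c.2 : ℕ) = d * (v.2 : ℕ) + (j : ℕ)

/-- The root of the tree. -/
def troot (d h : ℕ) (hh : 0 < h) : TNode d h :=
  ⟨⟨0, hh⟩, ⟨0, by simp⟩⟩

/-- The tree `T_d^h` has a black pebbling of cost at most `p`. -/
def BlackPebbles (d h : ℕ) (hh : 0 < h) (p : ℝ) : Prop :=
  PebblingLE (FMove (IsChild d h)) FConfig.BlackOnly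
    (fun C n => ∃ t ≤ n, (C t).b (troot d h hh) = 1) p

/-- The tree `T_d^h` has a whole black-white pebbling (no white sliding)
of cost at most `p`. -/
def BWPebbles (d h : ℕ) (hh : 0 < h) (p : ℝ) : Prop :=
  PebblingLE (FMove (IsChild d h)) FConfig.Whole
    (fun C n => ∃ t ≤ n, (C t).b (troot d h hh) = 1) p

/-- The tree `T_d^h` has a fractional pebbling of cost at most `p`. -/
def FRPebbles (d h : ℕ) (hh : 0 < h) (p : ℝ) : Prop :=
  PebblingLE (FMove (IsChild d h)) (fun _ => True)
    (fun C n => ∃ t ≤ n, (C t).b (troot d h hh) = 1) p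

/-- Fractional pebbling of `T_d^h` where white sliding moves are also permitted. -/
def FRPebblesWS (d h : ℕ) (hh : 0 < h) (p : ℝ) : Prop :=
  PebblingLE (fun C C' => FMove (IsChild d h) C C' ∨ WhiteSlide (IsChild d h) C C')
    (fun _ => True)
    (fun C n => ∃ t ≤ n, (C t).b (troot d h hh) = 1) p

namespace FracAux
set_option linter.unusedSectionVars false

open Finset

variable {V : Type}

theorem fext {C D : FConfig V} (hb : ∀ u, C.b u = D.b u) (hw : ∀ u, C.w u = D.w u) :
    C = D := by
  cases C; cases D
  simp only [FConfig.mk.injEq]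
  exact ⟨funext hb, funext hw⟩

instance : Add (FConfig V) := ⟨fun C D => ⟨fun v => C.b v + D.b v, fun v => C.w v + D.w v⟩⟩
instance : Zero (FConfig V) := ⟨FConfig.zero V⟩

@[simp] lemma add_b (C D : FConfig V) (u : V) : (C + D).b u = C.b u + D.b u := rfl
@[simp] lemma add_w (C D : FConfig V) (u : V) : (C + D).w u = C.w u + D.w u := rfl
@[simp] lemma zero_b (u : V) : (0 : FConfig V).b u = 0 := rfl
@[simp] lemma zero_w (u : V) : (0 : FConfig V).w u = 0 := rfl

instance : AddCommMonoid (FConfig V) where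
  add_assoc a b c := fext (fun u => add_assoc _ _ _) (fun u => add_assoc _ _ _)
  zero_add a := fext (fun u => zero_add _) (fun u => zero_add _)
  add_zero a := fext (fun u => add_zero _) (fun u => add_zero _)
  add_comm a b := fext (fun u => add_comm _ _) (fun u => add_comm _ _)
  nsmul := nsmulRec

lemma zero_eq : (0 : FConfig V) = FConfig.zero V := rfl

/-- A single-node configuration. -/
def sing [DecidableEq V] (u : V) (x y : ℝ) : FConfig V :=
  ⟨fun t => if t = u then x else 0, fun t => if t = u then y else 0⟩

@[simp] lemma sing_b [DecidableEq V] (u : V) (x y : ℝ) (t : V) : (sing u x y).b t = if t = u then x else 0 := rfl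
@[simp] lemma sing_w [DecidableEq V] (u : V) (x y : ℝ) (t : V) : (sing u x y).w t = if t = u then y else 0 := rfl

lemma weight_add [Fintype V] (C D : FConfig V) : (C + D).weight = C.weight + D.weight := by
  simp only [FConfig.weight, add_b, add_w, ← Finset.sum_add_distrib]
  congr 1; funext u; ring

lemma weight_zero [Fintype V] : (0 : FConfig V).weight = 0 := by simp [FConfig.weight]

lemma weight_sing [DecidableEq V] [Fintype V] (u : V) (x y : ℝ) : (sing u x y).weight = x + y := by
  simp [FConfig.weight, sing, Finset.sum_add_distrib]

/-- A chain of legal moves from `C` to `C'`, all configurations valid with weight `≤ p`. -/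
def Chain [Fintype V] (child : V → V → Prop) (p : ℝ) (C C' : FConfig V) : Prop :=
  ∃ n : ℕ, ∃ seq : ℕ → FConfig V, seq 0 = C ∧ seq n = C' ∧
    (∀ t ≤ n, (seq t).Valid ∧ (seq t).weight ≤ p) ∧
    (∀ t < n, FMove child (seq t) (seq (t + 1)))

namespace Chain

variable [Fintype V] {child : V → V → Prop} {p q : ℝ} {C C' C'' : FConfig V}

lemma refl (hv : C.Valid) (hw : C.weight ≤ p) : Chain child p C C :=
  ⟨0, fun _ => C, rfl, rfl, fun _ _ => ⟨hv, hw⟩, fun t ht => absurd ht (by omega)⟩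

lemma mono (hpq : p ≤ q) (hc : Chain child p C C') : Chain child q C C' := by
  obtain ⟨n, s, h0, hn, hval, hmov⟩ := hc
  exact ⟨n, s, h0, hn, fun t ht => ⟨(hval t ht).1, (hval t ht).2.trans hpq⟩, hmov⟩

lemma single (hm : FMove child C C') (h1 : C.Valid) (h2 : C'.Valid)
    (w1 : C.weight ≤ p) (w2 : C'.weight ≤ p) : Chain child p C C' := by
  refine ⟨1, fun t => if t = 0 then C else C', by simp, by simp, ?_, ?_⟩
  · intro t ht
    by_cases h : t = 0 <;> simp [h, h1, h2, w1, w2]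
  · intro t ht
    interval_cases t
    simpa using hm

lemma trans (hc : Chain child p C C') (hc' : Chain child p C' C'') :
    Chain child p C C'' := by
  obtain ⟨n, s, h0, hn, hval, hmov⟩ := hc
  obtain ⟨m, r, g0, gm, gval, gmov⟩ := hc'
  refine ⟨n + m, fun t => if t < n then s t else r (t - n), ?_, ?_, ?_, ?_⟩
  · by_cases h : 0 < n
    · simp [h, h0]
    · have hn0 : n = 0 := by omega
      subst hn0
      simp only [lt_irrefl, if_neg, if_false] at *
      simp [g0, ← hn, h0]
  · by_cases h : n + m < n
    · omega
    · simp only [h, if_neg, if_false]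
      simpa using gm
  · intro t ht
    by_cases h : t < n
    · simp only [h, if_pos]; exact hval t (by omega)
    · simp only [h, if_neg, if_false]; exact gval (t - n) (by omega)
  · intro t ht
    by_cases h1 : t + 1 < n
    · simp only [h1, show t < n by omega, if_pos]
      exact hmov t (by omega)
    · by_cases h2 : t < n
      · have he : t + 1 = n := by omega
        simp only [h1, h2, if_pos, if_neg, if_false]
        have : r (t + 1 - n) = s (t + 1) := by
          rw [he]; simp [g0, ← hn]
        rw [this]
        exact hmov t (by omega)
      · simp only [h1, h2, if_neg, if_false]
        have : t + 1 - n = (t - n) + 1 := by omega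
        rw [this]
        exact gmov (t - n) (by omega)

end Chain

/-- Building moves. -/
lemma fmove_addWhite [DecidableEq V] (child : V → V → Prop) (C : FConfig V) (u : V) {x : ℝ} (hx : 0 ≤ x) :
    FMove child C (C + sing u 0 x) := by
  refine Or.inr (Or.inl ⟨u, by simp, by simp [hx], fun t ht => by simp [ht]⟩)

lemma fmove_addBlack_neg [DecidableEq V] (child : V → V → Prop) (C : FConfig V) (u : V) {x : ℝ} (hx : x ≤ 0) :
    FMove child C (C + sing u x 0) := by
  refine Or.inl ⟨u, by simp [hx], by simp, fun t ht => by simp [ht]⟩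

lemma valid_add (O X : FConfig V) (hO : O.Valid)
    (hX : ∀ u, 0 ≤ X.b u ∧ 0 ≤ X.w u ∧ X.b u + X.w u ≤ 1)
    (hdisj : ∀ u, (X.b u = 0 ∧ X.w u = 0) ∨ (O.b u = 0 ∧ O.w u = 0)) : (O + X).Valid := by
  intro u
  obtain ⟨a1, a2, a3⟩ := hO u
  obtain ⟨b1, b2, b3⟩ := hX u
  simp only [add_b, add_w]
  rcases hdisj u with ⟨h1, h2⟩ | ⟨h1, h2⟩ <;>
    exact ⟨by linarith, by linarith, by linarith⟩

end FracAux
namespace FracAux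

section Tree

variable {d h : ℕ}

lemma node_ext {u v : TNode d h} (h1 : (u.1 : ℕ) = (v.1 : ℕ)) (h2 : (u.2 : ℕ) = (v.2 : ℕ)) :
    u = v := by
  obtain ⟨⟨l1, p1⟩, ⟨i1, q1⟩⟩ := u
  obtain ⟨⟨l2, p2⟩, ⟨i2, q2⟩⟩ := v
  simp only at h1 h2
  subst h1; subst h2; rfl

/-- The `j`-th child of `v` (`j` truncated to `d - 1`). -/
def childN (v : TNode d h) (hv : (v.1 : ℕ) + 1 < h) (hd : 0 < d) (j : ℕ) : TNode d h :=
  ⟨⟨(v.1 : ℕ) + 1, hv⟩, ⟨d * (v.2 : ℕ) + min j (d - 1), by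
    show d * (v.2 : ℕ) + min j (d - 1) < d ^ ((v.1 : ℕ) + 1)
    have h1 : (v.2 : ℕ) < d ^ (v.1 : ℕ) := v.2.isLt
    have h2 : d * ((v.2 : ℕ) + 1) ≤ d ^ ((v.1 : ℕ) + 1) := by
      rw [pow_succ']
      exact Nat.mul_le_mul_left d h1
    have h3 : d * ((v.2 : ℕ) + 1) = d * (v.2 : ℕ) + d := by ring
    omega⟩⟩

@[simp] lemma childN_fst (v : TNode d h) (hv hd j) :
    ((childN v hv hd j).1 : ℕ) = (v.1 : ℕ) + 1 := rfl

@[simp] lemma childN_snd (v : TNode d h) (hv hd j) :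
    ((childN v hv hd j).2 : ℕ) = d * (v.2 : ℕ) + min j (d - 1) := rfl

lemma childN_inj (v : TNode d h) (hv hd) {i j : ℕ} (hi : i < d) (hj : j < d)
    (he : childN v hv hd i = childN v hv hd j) : i = j := by
  have := congrArg (fun u : TNode d h => (u.2 : ℕ)) he
  simp only [childN_snd] at this
  omega

lemma isChild_childN (v : TNode d h) (hv hd j) :
    IsChild d h (childN v hv hd j) v :=
  ⟨rfl, ⟨⟨min j (d - 1), by omega⟩, rfl⟩⟩

/-- `u` is a descendant of `v` (or equal). -/
def Desc (v u : TNode d h) : Prop :=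
  (v.1 : ℕ) ≤ (u.1 : ℕ) ∧ (u.2 : ℕ) / d ^ ((u.1 : ℕ) - (v.1 : ℕ)) = (v.2 : ℕ)

lemma desc_refl (v : TNode d h) : Desc v v := ⟨le_refl _, by simp⟩

lemma desc_child (hd : 0 < d) {v u c : TNode d h} (hc : IsChild d h c u) (hu : Desc v u) :
    Desc v c := by
  obtain ⟨hl, ⟨j, hj⟩⟩ := hc
  have hj2 : (j : ℕ) < d := j.isLt
  have hu1 := hu.1
  refine ⟨by omega, ?_⟩
  have he : (c.1 : ℕ) - (v.1 : ℕ) = ((u.1 : ℕ) - (v.1 : ℕ)) + 1 := by omega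
  rw [he, pow_succ']
  rw [← Nat.div_div_eq_div_mul]
  have : (c.2 : ℕ) / d = (u.2 : ℕ) := by
    rw [hj, Nat.mul_add_div hd]
    have : (j : ℕ) / d = 0 := Nat.div_eq_of_lt hj2
    omega
  rw [this, hu.2]

lemma desc_trans {v u w : TNode d h} (h1 : Desc v u) (h2 : Desc u w) : Desc v w := by
  have h11 := h1.1
  have h21 := h2.1
  refine ⟨le_trans h11 h21, ?_⟩
  have he : (w.1 : ℕ) - (v.1 : ℕ) = ((w.1 : ℕ) - (u.1 : ℕ)) + ((u.1 : ℕ) - (v.1 : ℕ)) := by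
    omega
  rw [he, pow_add, ← Nat.div_div_eq_div_mul, h2.2, h1.2]

lemma desc_childN (v : TNode d h) (hv hd j) : Desc v (childN v hv hd j) :=
  desc_child hd (isChild_childN v hv hd j) (desc_refl v)

lemma desc_level {v u : TNode d h} (hd : Desc v u) : (v.1 : ℕ) ≤ (u.1 : ℕ) := hd.1

lemma desc_childN_level {v u : TNode d h} {hv hd j} (hu : Desc (childN v hv hd j) u) :
    (v.1 : ℕ) < (u.1 : ℕ) := by
  have := hu.1
  simp only [childN_fst] at this
  omega

lemma childN_desc_inj {v : TNode d h} {hv hd} {i j : ℕ} (hi : i < d) (hj : j < d)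
    {u : TNode d h} (h1 : Desc (childN v hv hd i) u) (h2 : Desc (childN v hv hd j) u) :
    i = j := by
  have e1 := h1.2
  have e2 := h2.2
  simp only [childN_fst, childN_snd] at e1 e2
  omega

lemma desc_childN_ne_self {v : TNode d h} {hv hd j} {u : TNode d h}
    (hu : Desc (childN v hv hd j) u) : u ≠ v := by
  intro he
  have := desc_childN_level hu
  subst he
  omega

lemma isChild_iff (hd : 0 < d) {c v : TNode d h} :
    IsChild d h c v ↔ ∃ hv : (v.1 : ℕ) + 1 < h, ∃ j < d, c = childN v hv hd j := by
  constructor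
  · rintro ⟨hl, ⟨j, hj⟩⟩
    have hv : (v.1 : ℕ) + 1 < h := by
      have := c.1.isLt
      omega
    refine ⟨hv, (j : ℕ), j.isLt, node_ext (by simp [hl]) ?_⟩
    simp only [childN_snd]
    have : min (j : ℕ) (d - 1) = (j : ℕ) := by
      have := j.isLt
      omega
    omega
  · rintro ⟨hv, j, hj, rfl⟩
    exact isChild_childN v hv hd j

lemma no_child_bottom {c v : TNode d h} (hv : ¬ ((v.1 : ℕ) + 1 < h)) :
    ¬ IsChild d h c v := by
  rintro ⟨hl, -⟩
  have := c.1.isLt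
  omega

end Tree

end FracAux
namespace FracAux

section RowJunk

variable {d h : ℕ}

lemma sum_b {V : Type} {ι : Type} (s : Finset ι) (f : ι → FConfig V) (u : V) :
    (∑ j ∈ s, f j).b u = ∑ j ∈ s, (f j).b u := by
  induction s using Finset.cons_induction with
  | empty => rfl
  | cons a s ha ih => simp [Finset.sum_cons, ih]

lemma sum_w {V : Type} {ι : Type} (s : Finset ι) (f : ι → FConfig V) (u : V) :
    (∑ j ∈ s, f j).w u = ∑ j ∈ s, (f j).w u := by
  induction s using Finset.cons_induction with
  | empty => rfl
  | cons a s ha ih => simp [Finset.sum_cons, ih]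

/-- A row of identical pebbles on the first `i` children of `v`. -/
noncomputable def row (v : TNode d h) (hv : (v.1 : ℕ) + 1 < h) (hd : 0 < d) (i : ℕ)
    (x y : ℝ) : FConfig (TNode d h) :=
  ∑ j ∈ Finset.range i, sing (childN v hv hd j) x y

lemma row_zero (v : TNode d h) (hv hd x y) : row v hv hd 0 x y = 0 := by
  simp [row]

lemma row_succ (v : TNode d h) (hv hd i x y) :
    row v hv hd (i + 1) x y = row v hv hd i x y + sing (childN v hv hd i) x y :=
  Finset.sum_range_succ _ _

lemma row_weight (v : TNode d h) (hv hd i x y) :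
    (row v hv hd i x y).weight = i * (x + y) := by
  induction i with
  | zero => simp [row_zero, weight_zero]
  | succ n ih =>
    rw [row_succ, weight_add, ih, weight_sing]
    push_cast
    ring

lemma row_b_mem (v : TNode d h) (hv hd) {i : ℕ} (hi : i ≤ d) {j : ℕ} (hj : j < i) (x y : ℝ) :
    (row v hv hd i x y).b (childN v hv hd j) = x := by
  rw [row, sum_b, Finset.sum_eq_single j]
  · simp
  · intro j' hj' hne
    simp only [sing_b]
    rw [if_neg]
    intro he
    exact hne (childN_inj v hv hd (Finset.mem_range.mp hj' |>.trans_le hi) (by omega) he.symm)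
  · intro hmem
    exact absurd (Finset.mem_range.mpr hj) hmem

lemma row_w_mem (v : TNode d h) (hv hd) {i : ℕ} (hi : i ≤ d) {j : ℕ} (hj : j < i) (x y : ℝ) :
    (row v hv hd i x y).w (childN v hv hd j) = y := by
  rw [row, sum_w, Finset.sum_eq_single j]
  · simp
  · intro j' hj' hne
    simp only [sing_w]
    rw [if_neg]
    intro he
    exact hne (childN_inj v hv hd (Finset.mem_range.mp hj' |>.trans_le hi) (by omega) he.symm)
  · intro hmem
    exact absurd (Finset.mem_range.mpr hj) hmem

lemma row_b_xzero (v : TNode d h) (hv hd) (i : ℕ) (u : TNode d h) (y : ℝ) :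
    (row v hv hd i 0 y).b u = 0 := by
  rw [row, sum_b]
  refine Finset.sum_eq_zero fun j hj => ?_
  simp only [sing_b]
  split <;> rfl

lemma row_b_not (v : TNode d h) (hv hd) {i : ℕ} {u : TNode d h}
    (hu : ∀ j, j < i → u ≠ childN v hv hd j) (x y : ℝ) :
    (row v hv hd i x y).b u = 0 := by
  rw [row, sum_b]
  refine Finset.sum_eq_zero fun j hj => ?_
  simp only [sing_b]
  rw [if_neg (hu j (Finset.mem_range.mp hj))]

lemma row_w_not (v : TNode d h) (hv hd) {i : ℕ} {u : TNode d h}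
    (hu : ∀ j, j < i → u ≠ childN v hv hd j) (x y : ℝ) :
    (row v hv hd i x y).w u = 0 := by
  rw [row, sum_w]
  refine Finset.sum_eq_zero fun j hj => ?_
  simp only [sing_w]
  rw [if_neg (hu j (Finset.mem_range.mp hj))]

/-- The junk (residual white pebbles) left behind after pebbling `v`:
half a white pebble on each non-last child of every node on the last-child path from `v`. -/
noncomputable def junk (hd : 0 < d) (v : TNode d h) : FConfig (TNode d h) :=
  if hv : (v.1 : ℕ) + 1 < h then
    row v hv hd (d - 1) 0 (1/2) + junk hd (childN v hv hd (d - 1))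
  else 0
termination_by h - (v.1 : ℕ)
decreasing_by simp; omega

lemma junk_eq_of_lt (hd : 0 < d) {v : TNode d h} (hv : (v.1 : ℕ) + 1 < h) :
    junk hd v = row v hv hd (d - 1) 0 (1/2) + junk hd (childN v hv hd (d - 1)) := by
  rw [junk, dif_pos hv]

lemma junk_eq_bot (hd : 0 < d) {v : TNode d h} (hv : ¬ ((v.1 : ℕ) + 1 < h)) :
    junk hd v = 0 := by
  rw [junk, dif_neg hv]

lemma junk_b (hd : 0 < d) (v : TNode d h) (u : TNode d h) : (junk hd v).b u = 0 := by
  suffices H : ∀ n (v : TNode d h), h - (v.1 : ℕ) = n → ∀ u, (junk hd v).b u = 0 from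
    H _ v rfl u
  intro n
  induction n using Nat.strong_induction_on with
  | _ n ih =>
    intro v hn u
    by_cases hv : (v.1 : ℕ) + 1 < h
    · rw [junk_eq_of_lt hd hv]
      simp only [add_b]
      rw [row_b_xzero v hv hd (d - 1) u (1/2),
        ih (h - ((v.1 : ℕ) + 1)) (by omega) (childN v hv hd (d - 1)) (by simp) u]
      ring
    · rw [junk_eq_bot hd hv]; rfl

lemma junk_w (hd : 0 < d) (v : TNode d h) (u : TNode d h) :
    (junk hd v).w u = 0 ∨ ((junk hd v).w u = 1/2 ∧ Desc v u ∧ u ≠ v) := by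
  suffices H : ∀ n (v : TNode d h), h - (v.1 : ℕ) = n → ∀ u,
      (junk hd v).w u = 0 ∨ ((junk hd v).w u = 1/2 ∧ Desc v u ∧ u ≠ v) from H _ v rfl u
  intro n
  induction n using Nat.strong_induction_on with
  | _ n ih =>
    intro v hn u
    by_cases hv : (v.1 : ℕ) + 1 < h
    · rw [junk_eq_of_lt hd hv]
      simp only [add_w]
      by_cases hc : ∃ j, j < d - 1 ∧ u = childN v hv hd j
      · obtain ⟨j, hj, rfl⟩ := hc
        rw [row_w_mem v hv hd (by omega) hj 0 (1/2)]
        have h2 : (junk hd (childN v hv hd (d - 1))).w (childN v hv hd j) = 0 := by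
          rcases ih (h - ((v.1 : ℕ) + 1)) (by omega) (childN v hv hd (d - 1)) (by simp) (childN v hv hd j) with
            h0 | ⟨-, hdesc, -⟩
          · exact h0
          · exact absurd (childN_desc_inj (by omega) (by omega) (desc_refl _) hdesc)
              (by omega)
        refine Or.inr ⟨by rw [h2]; ring, desc_childN v hv hd j, ?_⟩
        intro he
        have : ((childN v hv hd j).1 : ℕ) = (v.1 : ℕ) := by rw [he]
        simp at this
      · push_neg at hc
        rw [row_w_not v hv hd (fun j hj => hc j hj) 0 (1/2), zero_add]
        rcases ih (h - ((v.1 : ℕ) + 1)) (by omega) (childN v hv hd (d - 1)) (by simp) u with h0 | ⟨h12, hdesc, -⟩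
        · exact Or.inl h0
        · exact Or.inr ⟨h12, desc_trans (desc_childN v hv hd (d - 1)) hdesc,
            desc_childN_ne_self hdesc⟩
    · rw [junk_eq_bot hd hv]
      exact Or.inl rfl

lemma junk_weight (hd : 0 < d) (v : TNode d h) :
    (junk hd v).weight = ((h - 1 - (v.1 : ℕ) : ℕ) : ℝ) * ((d : ℝ) - 1) / 2 := by
  suffices H : ∀ n (v : TNode d h), h - (v.1 : ℕ) = n →
      (junk hd v).weight = ((h - 1 - (v.1 : ℕ) : ℕ) : ℝ) * ((d : ℝ) - 1) / 2 from H _ v rfl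
  intro n
  induction n using Nat.strong_induction_on with
  | _ n ih =>
    intro v hn
    by_cases hv : (v.1 : ℕ) + 1 < h
    · rw [junk_eq_of_lt hd hv, weight_add, row_weight,
        ih (h - ((v.1 : ℕ) + 1)) (by omega) (childN v hv hd (d - 1)) (by simp)]
      simp only [childN_fst]
      have e1 : h - 1 - ((v.1 : ℕ) + 1) = (h - 1 - (v.1 : ℕ)) - 1 := by omega
      have e2 : 1 ≤ h - 1 - (v.1 : ℕ) := by omega
      rw [e1]
      rw [Nat.cast_sub e2, Nat.cast_sub (by omega : 1 ≤ d)]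
      push_cast
      ring
    · rw [junk_eq_bot hd hv, weight_zero]
      have : h - 1 - (v.1 : ℕ) = 0 := by omega
      rw [this]
      norm_num

end RowJunk

end FracAux
namespace FracAux

section State

variable {d h : ℕ}

lemma desc_level_eq {v u : TNode d h} (hdd : Desc v u) (hl : (u.1 : ℕ) = (v.1 : ℕ)) :
    u = v := by
  refine node_ext hl ?_
  have h2 := hdd.2
  have h0 : (u.1 : ℕ) - (v.1 : ℕ) = 0 := by omega
  rw [h0] at h2
  simpa using h2

lemma ne_childN (v : TNode d h) (hv hd j) : v ≠ childN v hv hd j := by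
  intro he
  have := congrArg (fun u : TNode d h => (u.1 : ℕ)) he
  simp at this

lemma junk_w_childN (hd : 0 < d) (v : TNode d h) (hv) (j : ℕ) :
    (junk hd (childN v hv hd (d - 1))).w (childN v hv hd j) = 0 := by
  rcases junk_w hd (childN v hv hd (d - 1)) (childN v hv hd j) with h0 | ⟨-, hdesc, hne⟩
  · exact h0
  · exact absurd (desc_level_eq hdesc (by simp)) hne

lemma junk_w_self (hd : 0 < d) (v : TNode d h) :
    (junk hd v).w v = 0 := by
  rcases junk_w hd v v with h0 | ⟨-, -, hne⟩
  · exact h0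
  · exact absurd rfl hne

lemma junk_w_parent (hd : 0 < d) (v : TNode d h) (hv) :
    (junk hd (childN v hv hd (d - 1))).w v = 0 := by
  rcases junk_w hd (childN v hv hd (d - 1)) v with h0 | ⟨-, hdesc, -⟩
  · exact h0
  · have := hdesc.1
    simp only [childN_fst] at this
    omega

lemma junk_w_nonneg (hd : 0 < d) (v u : TNode d h) :
    0 ≤ (junk hd v).w u ∧ (junk hd v).w u ≤ 1/2 := by
  rcases junk_w hd v u with h0 | ⟨h12, -, -⟩
  · rw [h0]; norm_num
  · rw [h12]; norm_num

lemma junk_supp (hd : 0 < d) (v u : TNode d h) (hu : ¬ Desc v u) :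
    (junk hd v).b u = 0 ∧ (junk hd v).w u = 0 := by
  refine ⟨junk_b hd v u, ?_⟩
  rcases junk_w hd v u with h0 | ⟨-, hdesc, -⟩
  · exact h0
  · exact absurd hdesc hu

lemma sing_zero {V : Type} [DecidableEq V] (u : V) : sing u 0 0 = (0 : FConfig V) := by
  refine fext (fun t => ?_) (fun t => ?_) <;> simp [sing]

lemma sing_add_sing {V : Type} [DecidableEq V] (u : V) (a b a' b' : ℝ) :
    sing u a b + sing u a' b' = sing u (a + a') (b + b') := by
  refine fext (fun t => ?_) (fun t => ?_) <;> simp [sing] <;> split <;> simp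

lemma row_w_yzero (v : TNode d h) (hv hd) (i : ℕ) (u : TNode d h) (x : ℝ) :
    (row v hv hd i x 0).w u = 0 := by
  rw [row, sum_w]
  refine Finset.sum_eq_zero fun j hj => ?_
  simp only [sing_w]
  split <;> rfl

lemma row_zero' (v : TNode d h) (hv hd i) : row v hv hd i 0 0 = 0 := by
  rw [row]
  rw [Finset.sum_congr rfl (fun j _ => sing_zero (childN v hv hd j))]
  simp

/-- The master intermediate state appearing while working at an internal node `v`. -/
noncomputable def stateX (v : TNode d h) (hv : (v.1 : ℕ) + 1 < h) (hd : 0 < d)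
    (bv wv xb xc : ℝ) (i : ℕ) : FConfig (TNode d h) :=
  sing v bv wv + row v hv hd (d - 1) xb 0 + row v hv hd i 0 (1/2)
    + sing (childN v hv hd (d - 1)) xc 0 + junk hd (childN v hv hd (d - 1))

variable {v : TNode d h} {hv : (v.1 : ℕ) + 1 < h} {hd : 0 < d} {bv wv xb xc : ℝ} {i : ℕ}

lemma cj_ne_v {j : ℕ} : childN v hv hd j ≠ v := (ne_childN v hv hd j).symm

lemma cj_ne_ck {j j' : ℕ} (hj : j < d) (hj' : j' < d) (hne : j ≠ j') :
    childN v hv hd j ≠ childN v hv hd j' :=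
  fun he => hne (childN_inj v hv hd hj hj' he)

lemma sX_b_v : (stateX v hv hd bv wv xb xc i).b v = bv := by
  simp only [stateX, add_b, sing_b, junk_b]
  rw [row_b_xzero, row_b_not v hv hd (fun j _ => ne_childN v hv hd j) xb 0,
    if_true, if_neg (ne_childN v hv hd (d - 1))]
  ring

lemma sX_w_v : (stateX v hv hd bv wv xb xc i).w v = wv := by
  simp only [stateX, add_w, sing_w, junk_w_parent hd v hv]
  rw [row_w_yzero, row_w_not v hv hd (fun j _ => ne_childN v hv hd j) 0 (1/2),
    if_true]
  have : (if v = childN v hv hd (d - 1) then (0:ℝ) else 0) = 0 := by split <;> rfl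
  rw [this]
  ring

lemma sX_b_cj (hdd : 2 ≤ d) {j : ℕ} (hj : j < d - 1) :
    (stateX v hv hd bv wv xb xc i).b (childN v hv hd j) = xb := by
  simp only [stateX, add_b, sing_b, junk_b]
  rw [row_b_xzero, row_b_mem v hv hd (by omega) hj xb 0,
    if_neg cj_ne_v, if_neg (cj_ne_ck (by omega) (by omega) (by omega : j ≠ d - 1))]
  ring

lemma sX_w_cj (hdd : 2 ≤ d) (hi : i ≤ d - 1) {j : ℕ} (hj : j < d - 1) :
    (stateX v hv hd bv wv xb xc i).w (childN v hv hd j) =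
      if j < i then 1/2 else 0 := by
  simp only [stateX, add_w, sing_w, junk_w_childN hd v hv]
  rw [row_w_yzero, if_neg cj_ne_v]
  have hz : (if childN v hv hd j = childN v hv hd (d - 1) then (0:ℝ) else 0) = 0 := by
    split <;> rfl
  rw [hz]
  by_cases hji : j < i
  · rw [row_w_mem v hv hd (by omega) hji 0 (1/2), if_pos hji]
    ring
  · rw [row_w_not v hv hd (fun j' hj' => cj_ne_ck (by omega) (by omega) (by omega)) 0 (1/2),
      if_neg hji]
    ring

lemma sX_b_cd (hdd : 2 ≤ d) :
    (stateX v hv hd bv wv xb xc i).b (childN v hv hd (d - 1)) = xc := by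
  simp only [stateX, add_b, sing_b, junk_b]
  rw [row_b_xzero,
    row_b_not v hv hd (fun j' hj' => cj_ne_ck (by omega) (by omega) (by omega)) xb 0,
    if_neg cj_ne_v, if_true]
  ring

lemma sX_w_cd (hdd : 2 ≤ d) (hi : i ≤ d - 1) :
    (stateX v hv hd bv wv xb xc i).w (childN v hv hd (d - 1)) = 0 := by
  simp only [stateX, add_w, sing_w, junk_w_childN hd v hv]
  rw [row_w_yzero,
    row_w_not v hv hd (fun j' hj' => cj_ne_ck (by omega) (by omega) (by omega)) 0 (1/2),
    if_neg cj_ne_v, if_true]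
  ring

lemma sX_other (hdd : 2 ≤ d) (hi : i ≤ d - 1) {u : TNode d h} (hu1 : u ≠ v)
    (hu2 : ∀ j, j < d → u ≠ childN v hv hd j) :
    (stateX v hv hd bv wv xb xc i).b u = 0 ∧
    (stateX v hv hd bv wv xb xc i).w u = (junk hd (childN v hv hd (d - 1))).w u := by
  simp only [stateX, add_b, add_w, sing_b, sing_w, junk_b]
  rw [row_b_xzero, row_w_yzero,
    row_b_not v hv hd (fun j' hj' => hu2 j' (by omega)) xb 0,
    row_w_not v hv hd (fun j' hj' => hu2 j' (by omega)) 0 (1/2),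
    if_neg hu1, if_neg hu1, if_neg (hu2 (d - 1) (by omega)), if_neg (hu2 (d - 1) (by omega))]
  constructor <;> ring

lemma sX_supp (hdd : 2 ≤ d) (hi : i ≤ d - 1) {u : TNode d h} (hu : ¬ Desc v u) :
    (stateX v hv hd bv wv xb xc i).b u = 0 ∧ (stateX v hv hd bv wv xb xc i).w u = 0 := by
  have hu1 : u ≠ v := fun he => hu (he ▸ desc_refl v)
  have hu2 : ∀ j, j < d → u ≠ childN v hv hd j := fun j hj he =>
    hu (he ▸ desc_childN v hv hd j)
  obtain ⟨hb, hw⟩ := sX_other hdd hi hu1 hu2 (bv := bv) (wv := wv) (xb := xb) (xc := xc)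
  refine ⟨hb, ?_⟩
  rw [hw]
  exact (junk_supp hd _ u fun hdes =>
    hu (desc_trans (desc_childN v hv hd (d - 1)) hdes)).2

lemma sX_weight (hdd : 2 ≤ d) :
    (stateX v hv hd bv wv xb xc i).weight =
      bv + wv + ((d : ℝ) - 1) * xb + i * (1/2) + xc
        + ((h - 1 - ((v.1 : ℕ) + 1) : ℕ) : ℝ) * ((d : ℝ) - 1) / 2 := by
  simp only [stateX, weight_add, weight_sing, row_weight, junk_weight, childN_fst]
  rw [Nat.cast_sub (by omega : 1 ≤ d)]
  push_cast
  ring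

lemma sX_valid (hdd : 2 ≤ d) (hi : i ≤ d - 1) {O : FConfig (TNode d h)} (hO : O.Valid)
    (hOz : ∀ u, Desc v u → O.b u = 0 ∧ O.w u = 0)
    (h1 : 0 ≤ bv) (h2 : 0 ≤ wv) (h3 : bv + wv ≤ 1)
    (h4 : 0 ≤ xb) (h5 : xb ≤ 1/2) (h6 : 0 ≤ xc) (h7 : xc ≤ 1) :
    (O + stateX v hv hd bv wv xb xc i).Valid := by
  refine valid_add O _ hO ?_ ?_
  · intro u
    by_cases hu1 : u = v
    · subst hu1
      rw [sX_b_v, sX_w_v]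
      exact ⟨h1, h2, h3⟩
    · by_cases hu2 : ∃ j, j < d ∧ u = childN v hv hd j
      · obtain ⟨j, hj, rfl⟩ := hu2
        by_cases hjd : j < d - 1
        · rw [sX_b_cj hdd hjd, sX_w_cj hdd hi hjd]
          refine ⟨h4, ?_, ?_⟩ <;> split <;> norm_num <;> linarith
        · have hje : j = d - 1 := by omega
          subst hje
          rw [sX_b_cd hdd, sX_w_cd hdd hi]
          exact ⟨h6, by norm_num, by linarith⟩
      · push_neg at hu2
        obtain ⟨hb, hw⟩ := sX_other hdd hi hu1 hu2
          (bv := bv) (wv := wv) (xb := xb) (xc := xc)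
        rw [hb, hw]
        have := junk_w_nonneg hd (childN v hv hd (d - 1)) u
        exact ⟨le_refl 0, this.1, by linarith [this.2]⟩
  · intro u
    by_cases hu : Desc v u
    · exact Or.inr (hOz u hu)
    · exact Or.inl (sX_supp hdd hi hu)

end State

end FracAux
namespace FracAux

section State2

variable {d h : ℕ} {v : TNode d h} {hv : (v.1 : ℕ) + 1 < h} {hd : 0 < d} {x y : ℝ} {i : ℕ}

lemma row_cases (hi : i ≤ d) (x y : ℝ) (u : TNode d h) :
    ((row v hv hd i x y).b u = x ∧ (row v hv hd i x y).w u = y ∧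
      ∃ j, j < i ∧ u = childN v hv hd j) ∨
    ((row v hv hd i x y).b u = 0 ∧ (row v hv hd i x y).w u = 0) := by
  by_cases hc : ∃ j, j < i ∧ u = childN v hv hd j
  · obtain ⟨j, hj, rfl⟩ := hc
    exact Or.inl ⟨row_b_mem v hv hd hi hj x y, row_w_mem v hv hd hi hj x y, j, hj, rfl⟩
  · push_neg at hc
    exact Or.inr ⟨row_b_not v hv hd hc x y, row_w_not v hv hd hc x y⟩

lemma row_zero_on_desc {j : ℕ} (hj : j < d) (hij : i ≤ j) {u : TNode d h}
    (hu : Desc (childN v hv hd j) u) (x y : ℝ) :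
    (row v hv hd i x y).b u = 0 ∧ (row v hv hd i x y).w u = 0 := by
  have hne : ∀ j', j' < i → u ≠ childN v hv hd j' := by
    intro j' hj' he
    rw [he] at hu
    have := childN_desc_inj (show j' < d by omega) hj (desc_refl (childN v hv hd j')) hu
    omega
  exact ⟨row_b_not v hv hd hne x y, row_w_not v hv hd hne x y⟩

lemma row_valid (hdd : 2 ≤ d) (hi : i ≤ d) {O : FConfig (TNode d h)} (hO : O.Valid)
    (hOz : ∀ u, Desc v u → u ≠ v → O.b u = 0 ∧ O.w u = 0)
    (h1 : 0 ≤ x) (h2 : 0 ≤ y) (h3 : x + y ≤ 1) :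
    (O + row v hv hd i x y).Valid := by
  refine valid_add O _ hO ?_ ?_
  · intro u
    rcases row_cases hi x y u with ⟨hb, hw, -⟩ | ⟨hb, hw⟩ <;> rw [hb, hw]
    · exact ⟨h1, h2, h3⟩
    · norm_num
  · intro u
    rcases row_cases hi x y u with ⟨-, -, j, hj, he⟩ | ⟨hb, hw⟩
    · refine Or.inr ?_
      rw [he]
      exact hOz _ (desc_childN v hv hd j) cj_ne_v
    · exact Or.inl ⟨hb, hw⟩

lemma valid_add_sing {O : FConfig (TNode d h)} (hO : O.Valid) (v : TNode d h)
    (hbv : O.b v = 0) (hwv : O.w v = 0) {x y : ℝ}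
    (hx : 0 ≤ x) (hy : 0 ≤ y) (hxy : x + y ≤ 1) : (O + sing v x y).Valid := by
  refine valid_add O _ hO ?_ ?_
  · intro u
    by_cases hu : u = v <;> simp [hu, hx, hy, hxy]
  · intro u
    by_cases hu : u = v
    · subst hu; exact Or.inr ⟨hbv, hwv⟩
    · exact Or.inl (by simp [hu])

lemma stateY_valid (hdd : 2 ≤ d) {O : FConfig (TNode d h)} (hO : O.Valid)
    (hOz : ∀ u, Desc v u → u ≠ v → O.b u = 0 ∧ O.w u = 0)
    (hbv : O.b v = 0) (hwv : O.w v = 0) {s t : ℝ}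
    (hs : 0 ≤ s) (ht : 0 ≤ t) (hst : s + t ≤ 1) :
    (O + sing v s t + junk hd v).Valid := by
  have he : O + sing v s t + junk hd v = O + (sing v s t + junk hd v) := by
    refine fext (fun u => ?_) (fun u => ?_) <;> simp <;> ring
  rw [he]
  refine valid_add O _ hO ?_ ?_
  · intro u
    by_cases hu : u = v
    · subst hu
      simp [junk_b, junk_w_self hd u, hs, ht, hst]
    · have := junk_w_nonneg hd v u
      simp [hu, junk_b]
      constructor
      · linarith [this.1]
      · linarith [this.2]
  · intro u
    by_cases hu : Desc v u
    · by_cases hu2 : u = v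
      · subst hu2; exact Or.inr ⟨hbv, hwv⟩
      · exact Or.inr (hOz u hu hu2)
    · refine Or.inl ?_
      have := junk_supp hd v u hu
      have huv : u ≠ v := fun he2 => hu (he2 ▸ desc_refl v)
      simp [huv, junk_b, this.2]

end State2

end FracAux
namespace FracAux

section Main

variable {d h : ℕ}

/-- `FA`: from empty subtree, put a black pebble on `v`, leaving junk. -/
def P1 (hd : 0 < d) (v : TNode d h) (k : ℕ) : Prop :=
  ∀ O : FConfig (TNode d h), O.Valid → (∀ u, Desc v u → O.b u = 0 ∧ O.w u = 0) →
    Chain (IsChild d h) (O.weight + ((d : ℝ) - 1) * k / 2 + 1) O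
      (O + sing v 1 0 + junk hd v)

/-- `FB`: clean up the junk. -/
def P2 (hd : 0 < d) (v : TNode d h) (k : ℕ) : Prop :=
  ∀ O : FConfig (TNode d h), O.Valid →
    (∀ u, Desc v u → u ≠ v → O.b u = 0 ∧ O.w u = 0) →
    Chain (IsChild d h) (O.weight + ((d : ℝ) - 1) * k / 2 + 1) (O + junk hd v) O

/-- `HALF`: from empty subtree, put half a black pebble on `v`, subtree clean. -/
def P3 (hd : 0 < d) (v : TNode d h) (k : ℕ) : Prop :=
  ∀ O : FConfig (TNode d h), O.Valid → (∀ u, Desc v u → O.b u = 0 ∧ O.w u = 0) →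
    Chain (IsChild d h) (O.weight + ((d : ℝ) - 1) * k / 2 + 3/2) O
      (O + sing v (1/2) 0)

/-- `DIS`: discharge half a white pebble on `v`. -/
def P4 (hd : 0 < d) (v : TNode d h) (k : ℕ) : Prop :=
  ∀ O : FConfig (TNode d h), O.Valid → (∀ u, Desc v u → O.b u = 0 ∧ O.w u = 0) →
    Chain (IsChild d h) (O.weight + ((d : ℝ) - 1) * k / 2 + 3/2)
      (O + sing v 0 (1/2)) O

lemma P3_of (hdd : 2 ≤ d) {hd : 0 < d} {v : TNode d h} {k : ℕ}
    (hk : h - (v.1 : ℕ) = k) (hP1 : P1 hd v k) (hP2 : P2 hd v k) : P3 hd v k := by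
  have hk1 : 1 ≤ k := by have := v.1.isLt; omega
  have hdr : (2 : ℝ) ≤ (d : ℝ) := by exact_mod_cast hdd
  have hkr : (1 : ℝ) ≤ (k : ℝ) := by exact_mod_cast hk1
  intro O hO hOz
  refine Chain.trans (Chain.mono (by linarith) (hP1 O hO hOz)) ?_
  -- reduce the black pebble on `v` from 1 to 1/2
  have hOv := hOz v (desc_refl v)
  have e1 : (O + sing v 1 0 + junk hd v) + sing v (-(1/2)) 0
      = (O + sing v (1/2) 0) + junk hd v := by
    have e0 : sing v 1 0 + sing v (-(1/2)) 0 = sing v (1/2) (0 : ℝ) := by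
      rw [sing_add_sing]; norm_num
    calc (O + sing v 1 0 + junk hd v) + sing v (-(1/2)) 0
        = O + (sing v 1 0 + sing v (-(1/2)) 0) + junk hd v := by
          refine fext (fun u => ?_) (fun u => ?_) <;> simp <;> ring
      _ = (O + sing v (1/2) 0) + junk hd v := by rw [e0]
  have hjw : (junk hd v).weight = ((k : ℝ) - 1) * ((d : ℝ) - 1) / 2 := by
    rw [junk_weight hd v]
    have e : h - 1 - (v.1 : ℕ) = k - 1 := by omega
    rw [e, Nat.cast_sub hk1]
    push_cast
    ring
  have hv1 : (O + sing v 1 0 + junk hd v).Valid :=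
    stateY_valid hdd hO (fun u hu _ => hOz u hu) hOv.1 hOv.2 (by norm_num) le_rfl
      (by norm_num)
  have hv2 : ((O + sing v (1/2) 0) + junk hd v).Valid :=
    stateY_valid hdd hO (fun u hu _ => hOz u hu) hOv.1 hOv.2 (by norm_num) le_rfl
      (by norm_num)
  have hw1 : (O + sing v 1 0 + junk hd v).weight
      = O.weight + 1 + ((k : ℝ) - 1) * ((d : ℝ) - 1) / 2 := by
    rw [weight_add, weight_add, weight_sing, hjw]; ring
  have hw2 : ((O + sing v (1/2) 0) + junk hd v).weight
      = O.weight + 1/2 + ((k : ℝ) - 1) * ((d : ℝ) - 1) / 2 := by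
    rw [weight_add, weight_add, weight_sing, hjw]; ring
  refine Chain.trans (Chain.single ?_ hv1 hv2 ?_ ?_) ?_
  · have := fmove_addWhite (IsChild d h) (O + sing v 1 0 + junk hd v) v (le_refl (0:ℝ))
    have hm := fmove_addBlack_neg (IsChild d h) (O + sing v 1 0 + junk hd v) v
      (show -(1/2 : ℝ) ≤ 0 by norm_num)
    rwa [e1] at hm
  · rw [hw1]; nlinarith
  · rw [hw2]; nlinarith
  · -- clean up with P2, ambient O + sing v (1/2) 0
    have hOv' : (O + sing v (1/2) 0).Valid :=
      valid_add_sing hO v hOv.1 hOv.2 (by norm_num) le_rfl (by norm_num)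
    have hOz' : ∀ u, Desc v u → u ≠ v →
        (O + sing v (1/2) 0).b u = 0 ∧ (O + sing v (1/2) 0).w u = 0 := by
      intro u hu hne
      have := hOz u hu
      simp [hne, this.1, this.2]
    have hch := hP2 (O + sing v (1/2) 0) hOv' hOz'
    rw [weight_add, weight_sing] at hch
    refine Chain.mono (by linarith) hch
  
set_option maxHeartbeats 2000000 in
theorem mainInd (hdd : 2 ≤ d) (hd : 0 < d) :
    ∀ k : ℕ, ∀ v : TNode d h, h - (v.1 : ℕ) = k →
      P1 hd v k ∧ P2 hd v k ∧ P3 hd v k ∧ P4 hd v k := by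
  intro k
  induction k using Nat.strong_induction_on with
  | _ k ih =>
    intro v hk
    have hvlt := v.1.isLt
    have hk1 : 1 ≤ k := by omega
    have hdr : (2 : ℝ) ≤ (d : ℝ) := by exact_mod_cast hdd
    have hkr : (1 : ℝ) ≤ (k : ℝ) := by exact_mod_cast hk1
    by_cases hv : (v.1 : ℕ) + 1 < h
    · -- internal node
      have hk2 : 2 ≤ k := by omega
      have hkr2 : (2 : ℝ) ≤ (k : ℝ) := by exact_mod_cast hk2
      have hkm : ((k - 1 : ℕ) : ℝ) = (k : ℝ) - 1 := by
        rw [Nat.cast_sub hk1]; norm_num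
      have hkm2 : ((k - 2 : ℕ) : ℝ) = (k : ℝ) - 2 := by
        rw [Nat.cast_sub hk2]; norm_num
      have hdm : ((d - 1 : ℕ) : ℝ) = (d : ℝ) - 1 := by
        rw [Nat.cast_sub (by omega : 1 ≤ d)]; norm_num
      have hsplit : ((d:ℝ)-1)*(k:ℝ)/2 = ((d:ℝ)-1)*((k:ℝ)-1)/2 + ((d:ℝ)-1)/2 := by ring
      have hsplit2 : ((d:ℝ)-1)*(k:ℝ)/2 = ((k:ℝ)-2)*((d:ℝ)-1)/2 + ((d:ℝ)-1) := by ring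
      have hprod : (0:ℝ) ≤ ((d:ℝ)-1)*((k:ℝ)-1)/2 := by nlinarith
      have hprod2 : (0:ℝ) ≤ ((k:ℝ)-2)*((d:ℝ)-1)/2 := by nlinarith
      have hcast2 : ∀ i : ℕ, i ≤ d - 2 → (i:ℝ) ≤ (d:ℝ) - 2 := by
        intro i hi
        calc (i:ℝ) ≤ ((d-2:ℕ):ℝ) := by exact_mod_cast hi
          _ = (d:ℝ) - 2 := by rw [Nat.cast_sub (by omega : 2 ≤ d)]; norm_num
      have hkc : ∀ j : ℕ, h - ((childN v hv hd j).1 : ℕ) = k - 1 := by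
        intro j; simp only [childN_fst]; omega
      have ihc : ∀ j : ℕ, P1 hd (childN v hv hd j) (k-1) ∧ P2 hd (childN v hv hd j) (k-1)
          ∧ P3 hd (childN v hv hd j) (k-1) ∧ P4 hd (childN v hv hd j) (k-1) :=
        fun j => ih (k-1) (by omega) _ (hkc j)
      have ambz : ∀ O : FConfig (TNode d h),
          (∀ u, Desc v u → u ≠ v → O.b u = 0 ∧ O.w u = 0) →
          ∀ (i j : ℕ), j < d → i ≤ j → ∀ x y : ℝ, ∀ u, Desc (childN v hv hd j) u →
          (O + row v hv hd i x y).b u = 0 ∧ (O + row v hv hd i x y).w u = 0 := by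
        intro O hOz i j hj hij x y u hu
        have h1 := row_zero_on_desc hj hij hu x y
        have h2 := hOz u (desc_trans (desc_childN v hv hd j) hu) (desc_childN_ne_self hu)
        simp [h1.1, h1.2, h2.1, h2.2]
      have hsx : ∀ O : FConfig (TNode d h), ∀ bv wv xb xc : ℝ, ∀ i : ℕ,
          (O + stateX v hv hd bv wv xb xc i).weight
            = O.weight + (bv + wv + ((d:ℝ)-1)*xb + (i:ℝ)*(1/2) + xc
                + ((k:ℝ)-2)*((d:ℝ)-1)/2) := by
        intro O bv wv xb xc i
        rw [weight_add, sX_weight hdd]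
        have e : h - 1 - ((v.1:ℕ)+1) = k - 2 := by omega
        rw [e, hkm2]
      -- fill the first i children with half black pebbles
      have fill : ∀ i, i ≤ d - 1 → ∀ O : FConfig (TNode d h), O.Valid →
          (∀ u, Desc v u → u ≠ v → O.b u = 0 ∧ O.w u = 0) →
          Chain (IsChild d h)
            (O.weight + ((d:ℝ)-2)/2 + ((d:ℝ)-1)*((k:ℝ)-1)/2 + 3/2)
            O (O + row v hv hd i (1/2) 0) := by
        intro i
        induction i with
        | zero =>
          intro _ O hO hOz
          rw [row_zero, add_zero]
          exact Chain.refl hO (by nlinarith)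
        | succ i ihi =>
          intro hi O hO hOz
          refine Chain.trans (ihi (by omega) O hO hOz) ?_
          have hOv : (O + row v hv hd i (1/2) 0).Valid :=
            row_valid hdd (by omega) hO hOz (by norm_num) le_rfl (by norm_num)
          have hch := (ihc i).2.2.1 (O + row v hv hd i (1/2) 0) hOv
            (fun u hu => ambz O hOz i i (by omega) le_rfl (1/2) 0 u hu)
          rw [weight_add, row_weight, hkm] at hch
          have e1 : (O + row v hv hd i (1/2) 0) + sing (childN v hv hd i) (1/2) 0
              = O + row v hv hd (i+1) (1/2) 0 := by
            rw [row_succ, ← add_assoc]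
          rw [e1] at hch
          refine Chain.mono ?_ hch
          have hii := hcast2 i (by omega)
          linarith
      -- drain the white pebbles from the first i children
      have drain : ∀ i, i ≤ d - 1 → ∀ O : FConfig (TNode d h), O.Valid →
          (∀ u, Desc v u → u ≠ v → O.b u = 0 ∧ O.w u = 0) →
          Chain (IsChild d h)
            (O.weight + ((d:ℝ)-2)/2 + ((d:ℝ)-1)*((k:ℝ)-1)/2 + 3/2)
            (O + row v hv hd i 0 (1/2)) O := by
        intro i
        induction i with
        | zero =>
          intro _ O hO hOz
          rw [row_zero, add_zero]
          exact Chain.refl hO (by nlinarith)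
        | succ i ihi =>
          intro hi O hO hOz
          refine Chain.trans ?_ (ihi (by omega) O hO hOz)
          have hOv : (O + row v hv hd i 0 (1/2)).Valid :=
            row_valid hdd (by omega) hO hOz le_rfl (by norm_num) (by norm_num)
          have hch := (ihc i).2.2.2 (O + row v hv hd i 0 (1/2)) hOv
            (fun u hu => ambz O hOz i i (by omega) le_rfl 0 (1/2) u hu)
          rw [weight_add, row_weight, hkm] at hch
          have e1 : (O + row v hv hd i 0 (1/2)) + sing (childN v hv hd i) 0 (1/2)
              = O + row v hv hd (i+1) 0 (1/2) := by
            rw [row_succ, ← add_assoc]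
          rw [e1] at hch
          refine Chain.mono ?_ hch
          have hii := hcast2 i (by omega)
          linarith
      have hP1 : P1 hd v k := by
        intro O hO hOz
        have hOz' : ∀ u, Desc v u → u ≠ v → O.b u = 0 ∧ O.w u = 0 := fun u hu _ => hOz u hu
        have c1 := fill (d-1) le_rfl O hO hOz'
        have hrowv : (O + row v hv hd (d-1) (1/2) 0).Valid :=
          row_valid hdd (by omega) hO hOz' (by norm_num) le_rfl (by norm_num)
        have c2 := (ihc (d-1)).1 (O + row v hv hd (d-1) (1/2) 0) hrowv
          (fun u hu => ambz O hOz' (d-1) (d-1) (by omega) le_rfl (1/2) 0 u hu)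
        rw [weight_add, row_weight, hkm, hdm] at c2
        have e2 : ((O + row v hv hd (d-1) (1/2) 0) + sing (childN v hv hd (d-1)) 1 0
            + junk hd (childN v hv hd (d-1))) = O + stateX v hv hd 0 0 (1/2) 1 0 := by
          refine fext (fun u => ?_) (fun u => ?_) <;>
            simp [stateX, row_zero] <;> ring
        rw [e2] at c2
        have addW : ∀ i, i ≤ d - 1 →
            Chain (IsChild d h) (O.weight + ((d:ℝ)-1)*(k:ℝ)/2 + 1)
              (O + stateX v hv hd 0 0 (1/2) 1 0) (O + stateX v hv hd 0 0 (1/2) 1 i) := by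
          intro i
          induction i with
          | zero =>
            intro _
            refine Chain.refl (sX_valid hdd (by omega) hO hOz (by norm_num) le_rfl
              (by norm_num) (by norm_num) le_rfl (by norm_num) le_rfl) ?_
            rw [hsx]
            push_cast
            linarith
          | succ i ihi =>
            intro hi
            have hii := hcast2 i (by omega)
            refine Chain.trans (ihi (by omega)) (Chain.single ?_ ?_ ?_ ?_ ?_)
            · have hm := fmove_addWhite (IsChild d h) (O + stateX v hv hd 0 0 (1/2) 1 i)
                (childN v hv hd i) (show (0:ℝ) ≤ 1/2 by norm_num)
              have e : (O + stateX v hv hd 0 0 (1/2) 1 i) + sing (childN v hv hd i) 0 (1/2)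
                  = O + stateX v hv hd 0 0 (1/2) 1 (i+1) := by
                refine fext (fun u => ?_) (fun u => ?_) <;>
                  simp [stateX, row_succ] <;> ring
              rwa [e] at hm
            · exact sX_valid hdd (by omega) hO hOz (by norm_num) le_rfl (by norm_num)
                (by norm_num) le_rfl (by norm_num) le_rfl
            · exact sX_valid hdd (by omega) hO hOz (by norm_num) le_rfl (by norm_num)
                (by norm_num) le_rfl (by norm_num) le_rfl
            · rw [hsx]; push_cast; linarith
            · rw [hsx]; push_cast; linarith
        have hslide : Chain (IsChild d h) (O.weight + ((d:ℝ)-1)*(k:ℝ)/2 + 1)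
            (O + stateX v hv hd 0 0 (1/2) 1 (d-1)) (O + stateX v hv hd 1 0 0 0 (d-1)) := by
          refine Chain.single ?_
            (sX_valid hdd le_rfl hO hOz (by norm_num) le_rfl (by norm_num)
              (by norm_num) le_rfl (by norm_num) le_rfl)
            (sX_valid hdd le_rfl hO hOz (by norm_num) le_rfl (by norm_num)
              le_rfl (by norm_num) le_rfl (by norm_num)) ?_ ?_
          · refine Or.inr (Or.inr ⟨v, ?_, ?_, ?_, ?_, ?_⟩)
            · intro ch hch
              rcases (isChild_iff hd).mp hch with ⟨hv', j, hj, rfl⟩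
              have hrw : childN v hv' hd j = childN v hv hd j := rfl
              rw [hrw]
              have hOc := hOz _ (desc_childN v hv hd j)
              by_cases hjd : j < d - 1
              · rw [add_b, add_w, sX_b_cj hdd hjd, sX_w_cj hdd le_rfl hjd, if_pos hjd,
                  hOc.1, hOc.2]
                norm_num
              · have hje : j = d - 1 := by omega
                subst hje
                rw [add_b, add_w, sX_b_cd hdd, sX_w_cd hdd le_rfl, hOc.1, hOc.2]
                norm_num
            · rw [add_b, add_b, sX_b_v, sX_b_v]
              linarith
            · right
              rw [add_w, add_w, sX_w_v, sX_w_v]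
            · intro ch hch
              rcases (isChild_iff hd).mp hch with ⟨hv', j, hj, rfl⟩
              have hrw : childN v hv' hd j = childN v hv hd j := rfl
              rw [hrw]
              by_cases hjd : j < d - 1
              · rw [add_b, add_b, add_w, add_w, sX_b_cj hdd hjd, sX_b_cj hdd hjd,
                  sX_w_cj hdd le_rfl hjd, sX_w_cj hdd le_rfl hjd]
                norm_num
              · have hje : j = d - 1 := by omega
                subst hje
                rw [add_b, add_b, add_w, add_w, sX_b_cd hdd, sX_b_cd hdd,
                  sX_w_cd hdd le_rfl, sX_w_cd hdd le_rfl]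
                norm_num
            · intro u hu1 hu2
              have hu2' : ∀ j, j < d → u ≠ childN v hv hd j := by
                intro j hj he
                exact hu2 (he ▸ isChild_childN v hv hd j)
              have o1 := sX_other (v := v) (hv := hv) (hd := hd) (bv := (0:ℝ)) (wv := (0:ℝ))
                (xb := (1/2:ℝ)) (xc := (1:ℝ)) (i := d-1) hdd le_rfl hu1 hu2'
              have o2 := sX_other (v := v) (hv := hv) (hd := hd) (bv := (1:ℝ)) (wv := (0:ℝ))
                (xb := (0:ℝ)) (xc := (0:ℝ)) (i := d-1) hdd le_rfl hu1 hu2'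
              rw [add_b, add_b, add_w, add_w, o1.1, o1.2, o2.1, o2.2]
              exact ⟨rfl, rfl⟩
          · rw [hsx, hdm]; linarith
          · rw [hsx, hdm]; linarith
        have e5 : O + stateX v hv hd 1 0 0 0 (d-1) = O + sing v 1 0 + junk hd v := by
          refine fext (fun u => ?_) (fun u => ?_) <;>
            simp [stateX, junk_eq_of_lt hd hv, row_b_xzero, row_w_yzero] <;> ring
        have hfin := Chain.trans (Chain.mono (by linarith) c1)
          (Chain.trans (Chain.mono (by linarith) c2)
            (Chain.trans (addW (d-1) le_rfl) hslide))
        rwa [e5] at hfin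
      have hP2 : P2 hd v k := by
        intro O hO hOz
        have e1 : O + junk hd v
            = (O + row v hv hd (d-1) 0 (1/2)) + junk hd (childN v hv hd (d-1)) := by
          refine fext (fun u => ?_) (fun u => ?_) <;>
            simp [junk_eq_of_lt hd hv] <;> ring
        rw [e1]
        have hrv : (O + row v hv hd (d-1) 0 (1/2)).Valid :=
          row_valid hdd (by omega) hO hOz le_rfl (by norm_num) (by norm_num)
        have c1 := (ihc (d-1)).2.1 (O + row v hv hd (d-1) 0 (1/2)) hrv
          (fun u hu _ => ambz O hOz (d-1) (d-1) (by omega) le_rfl 0 (1/2) u hu)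
        rw [weight_add, row_weight, hkm, hdm] at c1
        exact Chain.trans (Chain.mono (by linarith) c1)
          (Chain.mono (by linarith) (drain (d-1) le_rfl O hO hOz))
      have hP4 : P4 hd v k := by
        intro O hO hOz
        have hOv := hOz v (desc_refl v)
        have hO'v : (O + sing v 0 (1/2)).Valid :=
          valid_add_sing hO v hOv.1 hOv.2 le_rfl (by norm_num) (by norm_num)
        have hO'z : ∀ u, Desc v u → u ≠ v →
            (O + sing v 0 (1/2)).b u = 0 ∧ (O + sing v 0 (1/2)).w u = 0 := by
          intro u hu hne
          have := hOz u hu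
          simp [hne, this.1, this.2]
        have hO'w : (O + sing v 0 (1/2)).weight = O.weight + 1/2 := by
          rw [weight_add, weight_sing]; ring
        have c1 := fill (d-1) le_rfl (O + sing v 0 (1/2)) hO'v hO'z
        rw [hO'w] at c1
        have hrv : ((O + sing v 0 (1/2)) + row v hv hd (d-1) (1/2) 0).Valid :=
          row_valid hdd (by omega) hO'v hO'z (by norm_num) le_rfl (by norm_num)
        have c2 := (ihc (d-1)).1 ((O + sing v 0 (1/2)) + row v hv hd (d-1) (1/2) 0) hrv
          (fun u hu => ambz (O + sing v 0 (1/2)) hO'z (d-1) (d-1) (by omega) le_rfl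
            (1/2) 0 u hu)
        rw [weight_add, row_weight, hkm, hdm, hO'w] at c2
        have e2 : (((O + sing v 0 (1/2)) + row v hv hd (d-1) (1/2) 0)
            + sing (childN v hv hd (d-1)) 1 0 + junk hd (childN v hv hd (d-1)))
            = O + stateX v hv hd 0 (1/2) (1/2) 1 0 := by
          refine fext (fun u => ?_) (fun u => ?_) <;>
            simp [stateX, row_zero] <;> ring
        rw [e2] at c2
        have addW : ∀ i, i ≤ d - 1 →
            Chain (IsChild d h) (O.weight + ((d:ℝ)-1)*(k:ℝ)/2 + 3/2)
              (O + stateX v hv hd 0 (1/2) (1/2) 1 0)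
              (O + stateX v hv hd 0 (1/2) (1/2) 1 i) := by
          intro i
          induction i with
          | zero =>
            intro _
            refine Chain.refl (sX_valid hdd (by omega) hO hOz le_rfl (by norm_num)
              (by norm_num) (by norm_num) le_rfl (by norm_num) le_rfl) ?_
            rw [hsx]
            push_cast
            linarith
          | succ i ihi =>
            intro hi
            have hii := hcast2 i (by omega)
            refine Chain.trans (ihi (by omega)) (Chain.single ?_ ?_ ?_ ?_ ?_)
            · have hm := fmove_addWhite (IsChild d h)
                (O + stateX v hv hd 0 (1/2) (1/2) 1 i)
                (childN v hv hd i) (show (0:ℝ) ≤ 1/2 by norm_num)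
              have e : (O + stateX v hv hd 0 (1/2) (1/2) 1 i)
                  + sing (childN v hv hd i) 0 (1/2)
                  = O + stateX v hv hd 0 (1/2) (1/2) 1 (i+1) := by
                refine fext (fun u => ?_) (fun u => ?_) <;>
                  simp [stateX, row_succ] <;> ring
              rwa [e] at hm
            · exact sX_valid hdd (by omega) hO hOz le_rfl (by norm_num) (by norm_num)
                (by norm_num) le_rfl (by norm_num) le_rfl
            · exact sX_valid hdd (by omega) hO hOz le_rfl (by norm_num) (by norm_num)
                (by norm_num) le_rfl (by norm_num) le_rfl
            · rw [hsx]; push_cast; linarith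
            · rw [hsx]; push_cast; linarith
        have hclear : Chain (IsChild d h) (O.weight + ((d:ℝ)-1)*(k:ℝ)/2 + 3/2)
            (O + stateX v hv hd 0 (1/2) (1/2) 1 (d-1))
            (O + stateX v hv hd 0 0 0 0 (d-1)) := by
          refine Chain.single ?_
            (sX_valid hdd le_rfl hO hOz le_rfl (by norm_num) (by norm_num)
              (by norm_num) le_rfl (by norm_num) le_rfl)
            (sX_valid hdd le_rfl hO hOz le_rfl (by norm_num) (by norm_num)
              le_rfl (by norm_num) le_rfl (by norm_num)) ?_ ?_
          · refine Or.inr (Or.inr ⟨v, ?_, ?_, ?_, ?_, ?_⟩)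
            · intro ch hch
              rcases (isChild_iff hd).mp hch with ⟨hv', j, hj, rfl⟩
              have hrw : childN v hv' hd j = childN v hv hd j := rfl
              rw [hrw]
              have hOc := hOz _ (desc_childN v hv hd j)
              by_cases hjd : j < d - 1
              · rw [add_b, add_w, sX_b_cj hdd hjd, sX_w_cj hdd le_rfl hjd, if_pos hjd,
                  hOc.1, hOc.2]
                norm_num
              · have hje : j = d - 1 := by omega
                subst hje
                rw [add_b, add_w, sX_b_cd hdd, sX_w_cd hdd le_rfl, hOc.1, hOc.2]
                norm_num
            · rw [add_b, add_b, sX_b_v, sX_b_v]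
            · left
              rw [add_w, sX_w_v, hOv.2]
              ring
            · intro ch hch
              rcases (isChild_iff hd).mp hch with ⟨hv', j, hj, rfl⟩
              have hrw : childN v hv' hd j = childN v hv hd j := rfl
              rw [hrw]
              by_cases hjd : j < d - 1
              · rw [add_b, add_b, add_w, add_w, sX_b_cj hdd hjd, sX_b_cj hdd hjd,
                  sX_w_cj hdd le_rfl hjd, sX_w_cj hdd le_rfl hjd]
                norm_num
              · have hje : j = d - 1 := by omega
                subst hje
                rw [add_b, add_b, add_w, add_w, sX_b_cd hdd, sX_b_cd hdd,
                  sX_w_cd hdd le_rfl, sX_w_cd hdd le_rfl]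
                norm_num
            · intro u hu1 hu2
              have hu2' : ∀ j, j < d → u ≠ childN v hv hd j := by
                intro j hj he
                exact hu2 (he ▸ isChild_childN v hv hd j)
              have o1 := sX_other (v := v) (hv := hv) (hd := hd) (bv := (0:ℝ))
                (wv := (1/2:ℝ)) (xb := (1/2:ℝ)) (xc := (1:ℝ)) (i := d-1) hdd le_rfl hu1 hu2'
              have o2 := sX_other (v := v) (hv := hv) (hd := hd) (bv := (0:ℝ))
                (wv := (0:ℝ)) (xb := (0:ℝ)) (xc := (0:ℝ)) (i := d-1) hdd le_rfl hu1 hu2'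
              rw [add_b, add_b, add_w, add_w, o1.1, o1.2, o2.1, o2.2]
              exact ⟨rfl, rfl⟩
          · rw [hsx, hdm]; linarith
          · rw [hsx, hdm]; linarith
        have e5 : O + stateX v hv hd 0 0 0 0 (d-1) = O + junk hd v := by
          refine fext (fun u => ?_) (fun u => ?_) <;>
            simp [stateX, junk_eq_of_lt hd hv, row_b_xzero, row_w_yzero] <;> ring
        have c6 := hP2 O hO (fun u hu _ => hOz u hu)
        have hfin := Chain.trans (Chain.mono (by linarith) c1)
          (Chain.trans (Chain.mono (by linarith) c2)
            (Chain.trans (addW (d-1) le_rfl)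
              (Chain.trans hclear
                (by rw [e5]; exact Chain.mono (by linarith) c6))))
        exact hfin
      exact ⟨hP1, hP2, P3_of hdd hk hP1 hP2, hP4⟩
    · -- leaf: k = 1
      have hke : k = 1 := by omega
      have hjz : junk hd v = 0 := junk_eq_bot hd hv
      have hP1 : P1 hd v k := by
        intro O hO hOz
        have hOv := hOz v (desc_refl v)
        have e1 : O + sing v 1 0 + junk hd v = O + sing v 1 0 := by
          rw [hjz, add_zero]
        rw [e1]
        have hval : (O + sing v 1 0).Valid :=
          valid_add_sing hO v hOv.1 hOv.2 (by norm_num) le_rfl (by norm_num)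
        refine Chain.single ?_ hO hval ?_ ?_
        · refine Or.inr (Or.inr ⟨v, ?_, ?_, ?_, ?_, ?_⟩)
          · intro c hc; exact absurd hc (no_child_bottom hv)
          · simp
          · right; simp
          · intro c hc; exact absurd hc (no_child_bottom hv)
          · intro u hu _; simp [hu]
        · nlinarith
        · rw [weight_add, weight_sing]; nlinarith
      have hP2 : P2 hd v k := by
        intro O hO hOz
        have e1 : O + junk hd v = O := by rw [hjz, add_zero]
        rw [e1]
        exact Chain.refl hO (by nlinarith)
      have hP4 : P4 hd v k := by
        intro O hO hOz
        have hOv := hOz v (desc_refl v)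
        have hval : (O + sing v 0 (1/2)).Valid :=
          valid_add_sing hO v hOv.1 hOv.2 le_rfl (by norm_num) (by norm_num)
        refine Chain.single ?_ hval hO ?_ ?_
        · refine Or.inr (Or.inr ⟨v, ?_, ?_, ?_, ?_, ?_⟩)
          · intro c hc; exact absurd hc (no_child_bottom hv)
          · simp
          · left; exact hOv.2
          · intro c hc; exact absurd hc (no_child_bottom hv)
          · intro u hu _; simp [hu]
        · rw [weight_add, weight_sing]; nlinarith
        · nlinarith
      exact ⟨hP1, hP2, P3_of hdd hk hP1 hP2, hP4⟩

end Main

end FracAux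
namespace FracAux

@[simp] lemma fzero_b {V : Type} (u : V) : (FConfig.zero V).b u = 0 := rfl
@[simp] lemma fzero_w {V : Type} (u : V) : (FConfig.zero V).w u = 0 := rfl

lemma pebbling_of_chains {V : Type} [Fintype V] {child : V → V → Prop} {p : ℝ}
    {M : FConfig V} {root : V}
    (h1 : Chain child p (FConfig.zero V) M) (h2 : Chain child p M (FConfig.zero V))
    (hr : M.b root = 1) :
    PebblingLE (FMove child) (fun _ => True)
      (fun C n => ∃ t ≤ n, (C t).b root = 1) p := by
  obtain ⟨n, s, h0, hn, hval, hmov⟩ := h1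
  obtain ⟨m, r, g0, gm, gval, gmov⟩ := h2
  refine ⟨n + m, fun t => if t < n then s t else r (t - n), ?_, ?_, ?_,
    fun _ _ => trivial, ?_, ⟨n, by omega, ?_⟩, ?_⟩
  · by_cases h : 0 < n
    · simp [h, h0]
    · have hn0 : n = 0 := by omega
      subst hn0
      simp only [lt_irrefl, if_neg, if_false] at *
      simp [g0, ← hn, h0]
  · by_cases h : n + m < n
    · omega
    · simp only [h, if_neg, if_false]
      simpa using gm
  · intro t ht
    by_cases h : t < n
    · simp only [h, if_pos]; exact (hval t (by omega)).1
    · simp only [h, if_neg, if_false]; exact (gval (t - n) (by omega)).1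
  · intro t ht
    by_cases h1 : t + 1 < n
    · simp only [h1, show t < n by omega, if_pos]
      exact hmov t (by omega)
    · by_cases h2 : t < n
      · have he : t + 1 = n := by omega
        simp only [h1, h2, if_pos, if_neg, if_false]
        have : r (t + 1 - n) = s (t + 1) := by
          rw [he]; simp [g0, ← hn]
        rw [this]
        exact hmov t (by omega)
      · simp only [h1, h2, if_neg, if_false]
        have : t + 1 - n = (t - n) + 1 := by omega
        rw [this]
        exact gmov (t - n) (by omega)
  · simp only [lt_irrefl, if_neg, if_false]
    simpa [g0] using hr
  · intro t ht
    by_cases h : t < n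
    · simp only [h, if_pos]; exact (hval t (by omega)).2
    · simp only [h, if_neg, if_false]; exact (gval (t - n) (by omega)).2

end FracAux

theorem frPebbles_upper' (d h : ℕ) (hd : 2 ≤ d) (hh : 2 ≤ h) :
    FRPebbles d h (Nat.lt_of_lt_of_le (Nat.succ_pos 1) hh) (((d : ℝ) - 1) * h / 2 + 1) := by
  open FracAux in
  have hd0 : 0 < d := by omega
  have hdr : (2 : ℝ) ≤ (d : ℝ) := by exact_mod_cast hd
  have hhr : (2 : ℝ) ≤ (h : ℝ) := by exact_mod_cast hh
  set root := troot d h (by omega : 0 < h) with hrootdef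
  have hroot1 : ((root.1 : ℕ)) = 0 := rfl
  have hroot : h - ((root.1 : ℕ)) = h := by rw [hroot1]; omega
  obtain ⟨hP1, hP2, -, -⟩ := mainInd (d := d) (h := h) hd hd0 h root hroot
  have hOval : (FConfig.zero (TNode d h)).Valid := by
    intro u; norm_num
  have hOw : (FConfig.zero (TNode d h)).weight = 0 := by
    simp [FConfig.weight]
  have hOz : ∀ u, Desc root u →
      (FConfig.zero (TNode d h)).b u = 0 ∧ (FConfig.zero (TNode d h)).w u = 0 :=
    fun u _ => ⟨rfl, rfl⟩
  have hjw : (junk hd0 root).weight = ((h : ℝ) - 1) * ((d : ℝ) - 1) / 2 := by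
    rw [junk_weight hd0 root, hroot1]
    have e : h - 1 - 0 = h - 1 := by omega
    rw [e, Nat.cast_sub (by omega : 1 ≤ h)]
    push_cast
    ring
  have c1 := hP1 (FConfig.zero (TNode d h)) hOval hOz
  rw [hOw] at c1
  have c1' : Chain (IsChild d h) (((d : ℝ) - 1) * h / 2 + 1)
      (FConfig.zero (TNode d h))
      (FConfig.zero (TNode d h) + sing root 1 0 + junk hd0 root) :=
    Chain.mono (by linarith) c1
  -- remove the black pebble from the root, then clean up
  have hMval : (FConfig.zero (TNode d h) + sing root 1 0 + junk hd0 root).Valid :=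
    stateY_valid hd hOval (fun u hu _ => hOz u hu) rfl rfl (by norm_num) le_rfl
      (by norm_num)
  have hJval : (FConfig.zero (TNode d h) + junk hd0 root).Valid := by
    refine valid_add _ _ hOval ?_ (fun u => Or.inr ⟨rfl, rfl⟩)
    intro u
    have h1 := junk_w_nonneg hd0 root u
    have h2 := junk_b hd0 root u
    exact ⟨by rw [h2], h1.1, by rw [h2]; linarith [h1.2]⟩
  have hMw : (FConfig.zero (TNode d h) + sing root 1 0 + junk hd0 root).weight
      = 1 + ((h : ℝ) - 1) * ((d : ℝ) - 1) / 2 := by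
    rw [weight_add, weight_add, weight_sing, hjw, hOw]; ring
  have hJw : (FConfig.zero (TNode d h) + junk hd0 root).weight
      = ((h : ℝ) - 1) * ((d : ℝ) - 1) / 2 := by
    rw [weight_add, hjw, hOw]; ring
  have hbound1 : (1 : ℝ) + ((h : ℝ) - 1) * ((d : ℝ) - 1) / 2
      ≤ ((d : ℝ) - 1) * h / 2 + 1 := by nlinarith
  have em : (FConfig.zero (TNode d h) + sing root 1 0 + junk hd0 root)
      + sing root (-1) 0 = FConfig.zero (TNode d h) + junk hd0 root := by
    refine fext (fun u => ?_) (fun u => ?_) <;> simp [junk_b] <;> split_ifs <;> ring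
  have cmid : Chain (IsChild d h) (((d : ℝ) - 1) * h / 2 + 1)
      (FConfig.zero (TNode d h) + sing root 1 0 + junk hd0 root)
      (FConfig.zero (TNode d h) + junk hd0 root) := by
    refine Chain.single ?_ hMval hJval ?_ ?_
    · have hm := fmove_addBlack_neg (IsChild d h)
        (FConfig.zero (TNode d h) + sing root 1 0 + junk hd0 root) root
        (show (-1 : ℝ) ≤ 0 by norm_num)
      rwa [em] at hm
    · rw [hMw]; exact hbound1
    · rw [hJw]; nlinarith
  have c2 := hP2 (FConfig.zero (TNode d h)) hOval (fun u hu _ => hOz u hu)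
  rw [hOw] at c2
  have c2' : Chain (IsChild d h) (((d : ℝ) - 1) * h / 2 + 1)
      (FConfig.zero (TNode d h) + junk hd0 root) (FConfig.zero (TNode d h)) :=
    Chain.mono (by linarith) c2
  have hMb : (FConfig.zero (TNode d h) + sing root 1 0 + junk hd0 root).b root = 1 := by
    simp [junk_b]
  exact pebbling_of_chains c1' (Chain.trans cmid c2') hMb

/-- For all `d, h ≥ 2`, the tree `T_d^h` can be fractionally pebbled with at most
`(d-1)h/2 + 1` pebbles. -/
theorem frPebbles_upper (d h : ℕ) (hd : 2 ≤ d) (hh : 2 ≤ h) :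
    FRPebbles d h (by omega) (((d : ℝ) - 1) * h / 2 + 1) := by
  exact frPebbles_upper' d h hd hh
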